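/- arXiv:2007.13911 — 2 statements merged into one kernel-verified Lean document; each statement's English description precedes it below -/
import Mathlib

section
/- Let p ∈ (0,1), α, β ∈ (0,1), and α', β' ∈ (0,1) with 1−α' > β' and 1−β' > α'. Set c₋ = log((1−α')/β'), c₊ = log((1−β')/α') + c₋, q = 1−p, and fix ω* ∈ ℕ. Define L : ℕ → ℝ by L(ω) = ((1−β)c₊ − c₋)·(1 − q^ω) for ω ≤ ω*, and L(ω) = c₊(1−β−α)·(1 − q^{ω*}) − (c₋ − α c₊)·(1 − q^ω) for ω > ω*. If (1−α)/α > log((1−β')/α') / log((1−α')/β') > β/(1−β), then L(ω) < L(ω*) for every ω ∈ ℕ with ω ≠ ω*, i.e., L is uniquely maximized at ω = ω*. -/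
/-- Consistency of maximum likelihood under misspecified test error rates: with true rates
`(α, β)` and assumed rates `(α', β')`, coefficients `c₋ = log((1−α')/β')`,
`c₊ = log((1−β')/α') + c₋`, `q = 1−p`, the asymptotic scaled log likelihood
`L(ω)` (as a function of the number `ω` of nonzero connections) is uniquely maximized at
the true number `ω*`, provided `(1−α)/α > log((1−β')/α')/log((1−α')/β') > β/(1−β)`. -/
theorem misspecified_likelihood_consistency
    (p α β α' β' : ℝ) (hp : p ∈ Set.Ioo (0:ℝ) 1)
    (hα : α ∈ Set.Ioo (0:ℝ) 1) (hβ : β ∈ Set.Ioo (0:ℝ) 1)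
    (hα' : α' ∈ Set.Ioo (0:ℝ) 1) (hβ' : β' ∈ Set.Ioo (0:ℝ) 1)
    (h1 : 1 - α' > β') (h2 : 1 - β' > α')
    (cm cp q : ℝ)
    (hcm : cm = Real.log ((1 - α') / β'))
    (hcp : cp = Real.log ((1 - β') / α') + cm)
    (hq : q = 1 - p) (ωs : ℕ)
    (L : ℕ → ℝ)
    (hL : ∀ ω : ℕ, L ω = if ω ≤ ωs then ((1 - β) * cp - cm) * (1 - q ^ ω)
          else cp * (1 - β - α) * (1 - q ^ ωs) - (cm - α * cp) * (1 - q ^ ω))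
    (hbound₁ : (1 - α) / α > Real.log ((1 - β') / α') / Real.log ((1 - α') / β'))
    (hbound₂ : Real.log ((1 - β') / α') / Real.log ((1 - α') / β') > β / (1 - β)) :
    ∀ ω : ℕ, ω ≠ ωs → L ω < L ωs := by
  obtain ⟨hp0, hp1⟩ := hp
  obtain ⟨hα0, hα1⟩ := hα
  obtain ⟨hβ0, hβ1⟩ := hβ
  have hα'0 := hα'.1
  have hβ'0 := hβ'.1
  set b := Real.log ((1 - β') / α') with hbdef
  have ha : 0 < cm := by
    rw [hcm]; apply Real.log_pos; rw [lt_div_iff₀ hβ'0]; linarith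
  have hb : 0 < b := by
    apply Real.log_pos; rw [lt_div_iff₀ hα'0]; linarith
  rw [← hcm] at hbound₁ hbound₂
  have hB1 : b * α < (1 - α) * cm := by
    have := (div_lt_div_iff₀ ha hα0).mp hbound₁
    linarith
  have hB2 : β * cm < b * (1 - β) := by
    have h1β : (0:ℝ) < 1 - β := by linarith
    have := (div_lt_div_iff₀ h1β ha).mp hbound₂
    linarith
  have hq0 : 0 < q := by rw [hq]; linarith
  have hq1 : q < 1 := by rw [hq]; linarith
  have hC1 : 0 < (1 - β) * cp - cm := by rw [hcp]; nlinarith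
  have hC2 : 0 < cm - α * cp := by rw [hcp]; nlinarith
  intro ω hω
  rcases lt_or_gt_of_ne hω with hlt | hgt
  · rw [hL ω, hL ωs, if_pos hlt.le, if_pos le_rfl]
    have hpow : q ^ ωs < q ^ ω := pow_lt_pow_right_of_lt_one₀ hq0 hq1 hlt
    nlinarith
  · rw [hL ω, hL ωs, if_neg (not_le.mpr hgt), if_pos le_rfl]
    have hpow : q ^ ω < q ^ ωs := pow_lt_pow_right_of_lt_one₀ hq0 hq1 hgt
    nlinarith
end

section
/- Let α, β ∈ (0, 1/2) and let α' = β' = r for some r ∈ (0, 1/2). Then 1−α' > β', 1−β' > α', and the misspecification bound (1−α)/α > log((1−β')/α') / log((1−α')/β') > β/(1−β) holds. -/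
/-- If the true error rates `α, β` are both below `1/2` and the assumed rates are equal,
`α' = β' = r` with `r ∈ (0, 1/2)`, then `1−α' > β'`, `1−β' > α'`, and the misspecification
bound `(1−α)/α > log((1−β')/α')/log((1−α')/β') > β/(1−β)` always holds. -/
theorem misspecification_bound_equal_rates
    (α β r : ℝ) (hα : α ∈ Set.Ioo (0:ℝ) (1/2)) (hβ : β ∈ Set.Ioo (0:ℝ) (1/2))
    (hr : r ∈ Set.Ioo (0:ℝ) (1/2))
    (α' β' : ℝ) (hα' : α' = r) (hβ' : β' = r) :
    1 - α' > β' ∧ 1 - β' > α' ∧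
    (1 - α) / α > Real.log ((1 - β') / α') / Real.log ((1 - α') / β') ∧
    Real.log ((1 - β') / α') / Real.log ((1 - α') / β') > β / (1 - β) := by
  obtain ⟨hr0, hr2⟩ := hr
  obtain ⟨ha0, ha2⟩ := hα
  obtain ⟨hb0, hb2⟩ := hβ
  obtain rfl := hα'; obtain rfl := hβ'
  have h1 : (1 - β') / β' > 1 := by
    rw [gt_iff_lt, lt_div_iff₀ hr0]; linarith
  have hlog : Real.log ((1 - β') / β') ≠ 0 := ne_of_gt (Real.log_pos h1)
  have hratio : Real.log ((1 - β') / β') / Real.log ((1 - β') / β') = 1 := div_self hlog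
  refine ⟨by linarith, by linarith, ?_, ?_⟩
  · rw [hratio, gt_iff_lt, lt_div_iff₀ ha0]; linarith
  · rw [hratio, gt_iff_lt, div_lt_iff₀ (by linarith : (0:ℝ) < 1 - β)]; linarith
end
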